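/- Every k-wheel (k ≥ 3) has exactly 2^{k+1} − 4 coupled spanning trees. -/

import Mathlib

/-- The edge set of the `k`-wheel: center `none`, spokes `some i`, `i : ZMod k`. -/
def wheelEdges (k : ℕ) : Set (Sym2 (Option (ZMod k))) :=
  {e | ∃ i : ZMod k, e = s(none, some i) ∨ e = s(some i, some (i + 1))}

/-- `T` is a coupled spanning tree of the `k`-wheel. -/
def IsCoupledTree (k : ℕ) (T : Set (Sym2 (Option (ZMod k)))) : Prop :=
  T ⊆ wheelEdges k ∧ (SimpleGraph.fromEdgeSet T).IsTree ∧
    (SimpleGraph.fromEdgeSet (wheelEdges k \ T)).IsTree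

namespace Wheel

variable {k : ℕ}

def spk (k : ℕ) (i : ZMod k) : Sym2 (Option (ZMod k)) := s(none, some i)
def rim (k : ℕ) (i : ZMod k) : Sym2 (Option (ZMod k)) := s(some i, some (i + 1))

def wset (a b : ZMod k → Bool) : Set (Sym2 (Option (ZMod k))) :=
  {e | ∃ i : ZMod k, (a i = true ∧ e = spk k i) ∨ (b i = true ∧ e = rim k i)}

lemma two_ne_zero' (hk : 3 ≤ k) : (2 : ZMod k) ≠ 0 := by
  haveI : NeZero k := ⟨by omega⟩
  intro h
  rw [show (2 : ZMod k) = ((2:ℕ) : ZMod k) by push_cast; ring,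
    ZMod.natCast_eq_zero_iff] at h
  exact absurd (Nat.le_of_dvd two_pos h) (by omega)

lemma one_ne_zero' (hk : 3 ≤ k) : (1 : ZMod k) ≠ 0 := by
  haveI : NeZero k := ⟨by omega⟩
  intro h
  rw [show (1 : ZMod k) = ((1:ℕ) : ZMod k) by push_cast; ring,
    ZMod.natCast_eq_zero_iff] at h
  exact absurd (Nat.le_of_dvd one_pos h) (by omega)

lemma succ_ne (hk : 3 ≤ k) (i : ZMod k) : i + 1 ≠ i := by
  intro h
  exact one_ne_zero' hk (by linear_combination h)

lemma spk_ne_rim (i j : ZMod k) : spk k i ≠ rim k j := by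
  intro h
  simp only [spk, rim, Sym2.eq_iff] at h
  rcases h with ⟨h, -⟩ | ⟨h, -⟩ <;> simp at h

lemma spk_inj {i j : ZMod k} (h : spk k i = spk k j) : i = j := by
  simp only [spk, Sym2.eq_iff] at h
  rcases h with ⟨-, h⟩ | ⟨h, -⟩ <;> simp_all

lemma rim_inj (hk : 3 ≤ k) {i j : ZMod k} (h : rim k i = rim k j) : i = j := by
  simp only [rim, Sym2.eq_iff, Option.some_inj] at h
  rcases h with ⟨h, -⟩ | ⟨h1, h2⟩
  · exact h
  · exfalso
    exact two_ne_zero' hk (by linear_combination h2 - h1)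

lemma spk_not_diag (i : ZMod k) : ¬ (spk k i).IsDiag := by simp [spk]

lemma rim_not_diag (hk : 3 ≤ k) (i : ZMod k) : ¬ (rim k i).IsDiag := by
  simp only [rim, Sym2.isDiag_iff_proj_eq, Option.some_inj]
  exact fun h => succ_ne hk i h.symm

lemma spk_mem_wset {a b : ZMod k → Bool} {i : ZMod k} :
    spk k i ∈ wset a b ↔ a i = true := by
  constructor
  · rintro ⟨j, ⟨hj, he⟩ | ⟨hj, he⟩⟩
    · rwa [spk_inj he]
    · exact absurd he (spk_ne_rim i j)
  · exact fun h => ⟨i, Or.inl ⟨h, rfl⟩⟩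

lemma rim_mem_wset (hk : 3 ≤ k) {a b : ZMod k → Bool} {i : ZMod k} :
    rim k i ∈ wset a b ↔ b i = true := by
  constructor
  · rintro ⟨j, ⟨hj, he⟩ | ⟨hj, he⟩⟩
    · exact absurd he.symm (spk_ne_rim j i)
    · rwa [rim_inj hk he]
  · exact fun h => ⟨i, Or.inr ⟨h, rfl⟩⟩

lemma wheelEdges_eq : wheelEdges k = wset (fun _ => true) (fun _ => true) := by
  ext e; simp [wheelEdges, wset, spk, rim]

lemma wset_subset_wheel (a b : ZMod k → Bool) : wset a b ⊆ wheelEdges k := by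
  rintro e ⟨i, ⟨-, he⟩ | ⟨-, he⟩⟩
  · exact ⟨i, Or.inl he⟩
  · exact ⟨i, Or.inr he⟩

lemma wheel_diff_wset (hk : 3 ≤ k) (a b : ZMod k → Bool) :
    wheelEdges k \ wset a b = wset (fun i => !a i) (fun i => !b i) := by
  ext e
  constructor
  · rintro ⟨⟨i, he | he⟩, hn⟩
    · refine ⟨i, Or.inl ⟨?_, he⟩⟩
      rw [Bool.not_eq_true', Bool.eq_false_iff]
      intro ha
      exact hn (he ▸ (spk_mem_wset (a := a) (b := b)).2 ha)
    · refine ⟨i, Or.inr ⟨?_, he⟩⟩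
      rw [Bool.not_eq_true', Bool.eq_false_iff]
      intro hb
      exact hn (he ▸ (rim_mem_wset hk (a := a) (b := b)).2 hb)
  · rintro ⟨i, ⟨hi, he⟩ | ⟨hi, he⟩⟩
    · refine ⟨⟨i, Or.inl he⟩, fun hm => ?_⟩
      rw [he, spk_mem_wset] at hm
      simp [hm] at hi
    · refine ⟨⟨i, Or.inr he⟩, fun hm => ?_⟩
      rw [he, rim_mem_wset hk] at hm
      simp [hm] at hi

lemma wset_eq_of_subset {T : Set (Sym2 (Option (ZMod k)))}
    (hT : T ⊆ wheelEdges k) {a b : ZMod k → Bool}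
    (ha : ∀ i, a i = true ↔ spk k i ∈ T) (hb : ∀ i, b i = true ↔ rim k i ∈ T) :
    T = wset a b := by
  ext e
  constructor
  · intro he
    rcases hT he with ⟨i, hi | hi⟩
    · subst hi; exact ⟨i, Or.inl ⟨(ha i).2 he, rfl⟩⟩
    · subst hi; exact ⟨i, Or.inr ⟨(hb i).2 he, rfl⟩⟩
  · rintro ⟨i, ⟨hi, he⟩ | ⟨hi, he⟩⟩ <;> rw [he]
    · exact (ha i).1 hi
    · exact (hb i).1 hi


open SimpleGraph

def gph (a b : ZMod k → Bool) : SimpleGraph (Option (ZMod k)) :=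
  SimpleGraph.fromEdgeSet (wset a b)

lemma cast_val_eq [NeZero k] (x : ZMod k) : ((x.val : ℕ) : ZMod k) = x :=
  ZMod.natCast_rightInverse x

lemma adj_spk {a b : ZMod k → Bool} {u : ZMod k} (h : a u = true) :
    (gph a b).Adj (some u) none := by
  rw [gph, fromEdgeSet_adj]
  exact ⟨⟨u, Or.inl ⟨h, Sym2.eq_swap⟩⟩, by simp⟩

lemma adj_rim (hk : 3 ≤ k) {a b : ZMod k → Bool} {u : ZMod k} (h : b u = true) :
    (gph a b).Adj (some u) (some (u + 1)) := by
  rw [gph, fromEdgeSet_adj]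
  refine ⟨⟨u, Or.inr ⟨h, rfl⟩⟩, ?_⟩
  intro he
  exact succ_ne hk u (Option.some_inj.1 he).symm

lemma adj_some_cases {a b : ZMod k → Bool} {u : ZMod k} {y : Option (ZMod k)}
    (h : (gph a b).Adj (some u) y) :
    (y = none ∧ a u = true) ∨ (y = some (u + 1) ∧ b u = true) ∨
      (∃ v, u = v + 1 ∧ y = some v ∧ b v = true) := by
  rw [gph, fromEdgeSet_adj] at h
  obtain ⟨⟨i, ⟨hi, he⟩ | ⟨hi, he⟩⟩, -⟩ := h
  · rw [spk, Sym2.eq_iff] at he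
    rcases he with ⟨he, -⟩ | ⟨he, hy⟩
    · simp at he
    · obtain rfl := Option.some_inj.1 he
      exact Or.inl ⟨hy, hi⟩
  · rw [rim, Sym2.eq_iff] at he
    rcases he with ⟨he, hy⟩ | ⟨he, hy⟩
    · obtain rfl := Option.some_inj.1 he
      exact Or.inr (Or.inl ⟨hy, hi⟩)
    · exact Or.inr (Or.inr ⟨i, Option.some_inj.1 he, hy, hi⟩)

lemma adj_none_cases {a b : ZMod k → Bool} {y : Option (ZMod k)}
    (h : (gph a b).Adj none y) : ∃ i, y = some i ∧ a i = true := by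
  rw [gph, fromEdgeSet_adj] at h
  obtain ⟨⟨i, ⟨hi, he⟩ | ⟨hi, he⟩⟩, -⟩ := h
  · rw [spk, Sym2.eq_iff] at he
    rcases he with ⟨-, hy⟩ | ⟨he, -⟩
    · exact ⟨i, hy, hi⟩
    · simp at he
  · rw [rim, Sym2.eq_iff] at he
    rcases he with ⟨he, -⟩ | ⟨he, -⟩ <;> simp at he

lemma walk_closed {V : Type*} {H : SimpleGraph V} {S : Set V}
    (hS : ∀ x y, x ∈ S → H.Adj x y → y ∈ S) :
    ∀ {u v : V} (_ : H.Walk u v), u ∈ S → v ∈ S := by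
  intro u v p
  induction p with
  | nil => exact id
  | cons h p ih => exact fun hu => ih (hS _ _ hu h)

lemma not_reachable {V : Type*} {H : SimpleGraph V} {S : Set V}
    (hS : ∀ x y, x ∈ S → H.Adj x y → y ∈ S) {u v : V} (hu : u ∈ S) (hv : v ∉ S) :
    ¬ H.Reachable u v := fun ⟨p⟩ => hv (walk_closed hS p hu)

/-- connectivity, `s = 0` version : spokes exactly where `b` is false. -/
lemma reach0 {b : ZMod k → Bool} (hk : 3 ≤ k) :
    ∀ (n : ℕ) (v : ZMod k), b (v + n) = false →
      (gph (fun i => !b i) b).Reachable (some v) none := by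
  intro n
  induction n with
  | zero =>
    intro v hv
    simp only [Nat.cast_zero, add_zero] at hv
    exact (adj_spk (by simp [hv])).reachable
  | succ n ih =>
    intro v hv
    by_cases hbv : b v = true
    · have h1 : (gph (fun i => !b i) b).Reachable (some v) (some (v+1)) :=
        (adj_rim hk hbv).reachable
      refine h1.trans (ih (v+1) ?_)
      rwa [show v + 1 + (n : ZMod k) = v + ((n : ℕ) + 1 : ℕ) by push_cast; ring]
    · exact (adj_spk (by simp [Bool.eq_false_iff.2 hbv])).reachable

lemma conn0 (hk : 3 ≤ k) {b : ZMod k → Bool} (hb : ∃ i, b i = false) :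
    (gph (fun i => !b i) b).Connected := by
  haveI : NeZero k := ⟨by omega⟩
  obtain ⟨j, hj⟩ := hb
  have haux : ∀ x : Option (ZMod k), (gph (fun i => !b i) b).Reachable x none := by
    rintro (_ | u)
    · exact Reachable.refl none
    · exact reach0 hk ((j - u).val) u (by rwa [cast_val_eq, add_sub_cancel])
  constructor
  intro x y
  exact (haux x).trans (haux y).symm

/-- connectivity, `s = 1` version : spokes exactly at `i+1` where `b i` false. -/
lemma reach1 {b : ZMod k → Bool} (hk : 3 ≤ k) :
    ∀ (n : ℕ) (v : ZMod k), b (v - 1 - n) = false →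
      (gph (fun i => !b (i - 1)) b).Reachable (some v) none := by
  intro n
  induction n with
  | zero =>
    intro v hv
    simp only [Nat.cast_zero, sub_zero] at hv
    exact (adj_spk (by simp [hv])).reachable
  | succ n ih =>
    intro v hv
    by_cases hbv : b (v - 1) = true
    · have h1 : (gph (fun i => !b (i-1)) b).Adj (some (v-1)) (some v) := by
        have := adj_rim (a := fun i => !b (i-1)) hk hbv
        rwa [sub_add_cancel] at this
      refine h1.symm.reachable.trans (ih (v-1) ?_)
      rwa [show v - 1 - 1 - (n : ZMod k) = v - 1 - ((n : ℕ) + 1 : ℕ) by push_cast; ring]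
    · exact (adj_spk (by simp [Bool.eq_false_iff.2 hbv])).reachable

lemma conn1 (hk : 3 ≤ k) {b : ZMod k → Bool} (hb : ∃ i, b i = false) :
    (gph (fun i => !b (i - 1)) b).Connected := by
  haveI : NeZero k := ⟨by omega⟩
  obtain ⟨j, hj⟩ := hb
  have haux : ∀ x : Option (ZMod k), (gph (fun i => !b (i-1)) b).Reachable x none := by
    rintro (_ | u)
    · exact Reachable.refl none
    · refine reach1 hk ((u - 1 - j).val) u ?_
      rw [cast_val_eq]
      rw [show u - 1 - (u - 1 - j) = j by ring]
      exact hj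
  constructor
  intro x y
  exact (haux x).trans (haux y).symm





variable {k : ℕ}

lemma sdiff_edge_ne {V : Type*} {G : SimpleGraph V} {e : Sym2 V} {x y : V}
    (h : (G \ SimpleGraph.fromEdgeSet {e}).Adj x y) : G.Adj x y ∧ s(x, y) ≠ e := by
  rw [SimpleGraph.sdiff_adj, SimpleGraph.fromEdgeSet_adj] at h
  exact ⟨h.1, fun he => h.2 ⟨by simp [he], h.1.ne⟩⟩

lemma cast_eq_neg_one_le (hk : 3 ≤ k) {t : ℕ} (h : ((t : ℕ) : ZMod k) = -1) :
    k - 1 ≤ t := by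
  haveI : NeZero k := ⟨by omega⟩
  have h1 : ((k - 1 : ℕ) : ZMod k) = -1 := by
    push_cast [Nat.cast_sub (by omega : 1 ≤ k)]
    rw [ZMod.natCast_self]; ring
  have h2 : t % k = (k - 1) % k :=
    (ZMod.natCast_eq_natCast_iff' _ _ _).1 (h.trans h1.symm)
  rw [Nat.mod_eq_of_lt (by omega : k - 1 < k)] at h2
  calc k - 1 = t % k := h2.symm
  _ ≤ t := Nat.mod_le t k

/-- The "descendants" separating set for direction `s = 0`. -/
def S0 (b : ZMod k → Bool) (v0 : ZMod k) : Set (Option (ZMod k)) :=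
  {x | ∃ t : ℕ, (∀ r < t, b (v0 - 1 - r) = true) ∧ x = some (v0 - t)}

lemma closed0 (hk : 3 ≤ k) {b : ZMod k → Bool} (v0 : ZMod k) :
    ∀ x y, x ∈ S0 b v0 →
      ((gph (fun i => !b i) b) \
        SimpleGraph.fromEdgeSet {if b v0 = true then rim k v0 else spk k v0}).Adj x y →
      y ∈ S0 b v0 := by
  rintro x y ⟨t, hR, rfl⟩ hadj
  obtain ⟨hadj, hne⟩ := sdiff_edge_ne hadj
  rcases adj_some_cases hadj with ⟨rfl, hu⟩ | ⟨rfl, hu⟩ | ⟨v, hv, rfl, hu⟩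
  · -- spoke at u = v0 - t
    exfalso
    simp only [Bool.not_eq_true'] at hu
    rcases t with _ | t'
    · -- t = 0 : removed edge
      have hu' : b v0 = false := by simpa using hu
      apply hne
      rw [if_neg (by simp [hu']), spk,
        show v0 - ((0 : ℕ) : ZMod k) = v0 by norm_num]
      exact Sym2.eq_swap
    · have := hR t' (Nat.lt_succ_self t')
      rw [show v0 - 1 - (t' : ZMod k) = v0 - ((t' : ℕ) + 1 : ℕ) by push_cast; ring] at this
      rw [this] at hu
      simp at hu
  · -- rim up : y = some (v0 - t + 1)
    rcases t with _ | t'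
    · -- t = 0 : removed edge rim v0
      exfalso
      have hu' : b v0 = true := by simpa using hu
      apply hne
      rw [if_pos hu', rim]
      norm_num
    · refine ⟨t', fun r hr => hR r (hr.trans (Nat.lt_succ_self t')), ?_⟩
      rw [show v0 - ((t' : ℕ) + 1 : ℕ) + 1 = v0 - (t' : ℕ) by push_cast; ring]
  · -- rim down : y = some v, v0 - t = v + 1
    refine ⟨t + 1, fun r hr => ?_, ?_⟩
    · rcases Nat.lt_succ_iff_lt_or_eq.1 hr with hr' | rfl
      · exact hR r hr'
      · rw [show v0 - 1 - (r : ZMod k) = v by linear_combination hv]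
        exact hu
    · rw [show v0 - ((t : ℕ) + 1 : ℕ) = v by push_cast; linear_combination hv]

lemma some_mem_S0 {b : ZMod k → Bool} (v0 : ZMod k) : some v0 ∈ S0 b v0 :=
  ⟨0, by simp, by simp⟩

lemma none_not_mem_S0 {b : ZMod k → Bool} (v0 : ZMod k) : none ∉ S0 b v0 := by
  rintro ⟨t, -, h⟩; cases h

lemma succ_not_mem_S0 (hk : 3 ≤ k) {b : ZMod k → Bool} {v0 : ZMod k}
    (hv0 : b v0 = true) (hb : ∃ j, b j = false) : some (v0 + 1) ∉ S0 b v0 := by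
  haveI : NeZero k := ⟨by omega⟩
  rintro ⟨t, hR, heq⟩
  obtain ⟨j, hj⟩ := hb
  have hjv : j ≠ v0 := fun h => by rw [h, hv0] at hj; exact Bool.noConfusion hj
  have ht : (t : ZMod k) = -1 := by
    have := Option.some_inj.1 heq
    linear_combination this
  have htk : k - 1 ≤ t := cast_eq_neg_one_le hk ht
  set r := (v0 - 1 - j).val with hr
  have hrj : v0 - 1 - (r : ZMod k) = j := by
    rw [hr, cast_val_eq]; ring
  have hrk : r < k := ZMod.val_lt _
  have hrne : r ≠ k - 1 := by
    intro h
    apply hjv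
    have : ((r : ℕ) : ZMod k) = -1 := by
      rw [h]
      push_cast [Nat.cast_sub (by omega : 1 ≤ k)]
      rw [ZMod.natCast_self]; ring
    have := hrj
    rw [‹((r : ℕ) : ZMod k) = -1›] at this
    linear_combination - this
  have : b (v0 - 1 - r) = true := hR r (by omega)
  rw [hrj, hj] at this
  exact Bool.noConfusion this

lemma acyc0 (hk : 3 ≤ k) {b : ZMod k → Bool} (hb : ∃ j, b j = false) :
    (gph (fun i => !b i) b).IsAcyclic := by
  rw [SimpleGraph.isAcyclic_iff_forall_adj_isBridge]
  intro v w hvw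
  have hvw' := hvw
  rw [gph, SimpleGraph.fromEdgeSet_adj] at hvw'
  obtain ⟨⟨i, ⟨hi, he⟩ | ⟨hi, he⟩⟩, -⟩ := hvw'
  · -- spoke i; note !b i = true
    simp only [Bool.not_eq_true'] at hi
    have hnr : ¬ ((gph (fun i => !b i) b) \
        SimpleGraph.fromEdgeSet {spk k i}).Reachable (some i) none := by
      have hcl := closed0 hk (b := b) i
      rw [if_neg (by simp [hi])] at hcl
      exact not_reachable hcl (some_mem_S0 i) (none_not_mem_S0 i)
    rw [spk, Sym2.eq_iff] at he
    rcases he with ⟨rfl, rfl⟩ | ⟨rfl, rfl⟩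
    · rw [SimpleGraph.isBridge_iff]
      refine fun h => hnr ?_
      rw [show s((none : Option (ZMod k)), some i) = spk k i from rfl] at h
      exact h.symm
    · rw [SimpleGraph.isBridge_iff]
      refine fun h => hnr ?_
      rw [show s(some i, (none : Option (ZMod k))) = spk k i from Sym2.eq_swap] at h
      exact h
  · -- rim i
    have hnr : ¬ ((gph (fun i => !b i) b) \
        SimpleGraph.fromEdgeSet {rim k i}).Reachable (some i) (some (i + 1)) := by
      have hcl := closed0 hk (b := b) i
      rw [if_pos hi] at hcl
      exact not_reachable hcl (some_mem_S0 i) (succ_not_mem_S0 hk hi hb)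
    rw [rim, Sym2.eq_iff] at he
    rcases he with ⟨rfl, rfl⟩ | ⟨rfl, rfl⟩
    · rw [SimpleGraph.isBridge_iff]
      refine fun h => hnr ?_
      rw [show s(some i, some (i + 1)) = rim k i from rfl] at h
      exact h
    · rw [SimpleGraph.isBridge_iff]
      refine fun h => hnr ?_
      rw [show s(some (i + 1), some i) = rim k i from Sym2.eq_swap] at h
      exact h.symm


/-- The "descendants" separating set for direction `s = 1`. -/
def S1 (b : ZMod k → Bool) (v0 : ZMod k) : Set (Option (ZMod k)) :=
  {x | ∃ t : ℕ, (∀ r < t, b (v0 + r) = true) ∧ x = some (v0 + t)}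

lemma closed1 (hk : 3 ≤ k) {b : ZMod k → Bool} (v0 : ZMod k) :
    ∀ x y, x ∈ S1 b v0 →
      ((gph (fun i => !b (i - 1)) b) \
        SimpleGraph.fromEdgeSet
          {if b (v0 - 1) = true then rim k (v0 - 1) else spk k v0}).Adj x y →
      y ∈ S1 b v0 := by
  rintro x y ⟨t, hR, rfl⟩ hadj
  obtain ⟨hadj, hne⟩ := sdiff_edge_ne hadj
  rcases adj_some_cases hadj with ⟨rfl, hu⟩ | ⟨rfl, hu⟩ | ⟨v, hv, rfl, hu⟩
  · -- spoke at u = v0 + t ; b (v0 + t - 1) = false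
    exfalso
    simp only [Bool.not_eq_true'] at hu
    rcases t with _ | t'
    · have hu' : b (v0 - 1) = false := by
        rw [show v0 - 1 = v0 + ((0:ℕ) : ZMod k) - 1 by norm_num]
        exact hu
      apply hne
      rw [if_neg (by simp [hu']), spk,
        show v0 + ((0 : ℕ) : ZMod k) = v0 by norm_num]
      exact Sym2.eq_swap
    · have h1 := hR t' (Nat.lt_succ_self t')
      rw [show v0 + ((t' : ℕ) + 1 : ℕ) - 1 = v0 + (t' : ℕ) by push_cast; ring] at hu
      rw [h1] at hu
      exact Bool.noConfusion hu
  · -- rim up : y = some (v0 + t + 1)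
    refine ⟨t + 1, fun r hr => ?_, by push_cast; ring_nf⟩
    rcases Nat.lt_succ_iff_lt_or_eq.1 hr with hr' | rfl
    · exact hR r hr'
    · exact hu
  · -- rim down : v0 + t = v + 1 , b v = true
    rcases t with _ | t'
    · -- t = 0 : removed edge rim (v0 - 1)
      exfalso
      have hv' : v = v0 - 1 := by push_cast at hv; linear_combination - hv
      apply hne
      subst hv'
      rw [if_pos hu, rim, sub_add_cancel,
        show v0 + ((0 : ℕ) : ZMod k) = v0 by norm_num]
      exact Sym2.eq_swap
    · refine ⟨t', fun r hr => hR r (hr.trans (Nat.lt_succ_self t')), ?_⟩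
      rw [show v0 + (t' : ℕ) = v by push_cast at hv ⊢; linear_combination hv]

lemma some_mem_S1 {b : ZMod k → Bool} (v0 : ZMod k) : some v0 ∈ S1 b v0 :=
  ⟨0, by simp, by simp⟩

lemma none_not_mem_S1 {b : ZMod k → Bool} (v0 : ZMod k) : none ∉ S1 b v0 := by
  rintro ⟨t, -, h⟩; cases h

lemma pred_not_mem_S1 (hk : 3 ≤ k) {b : ZMod k → Bool} {v0 : ZMod k}
    (hv0 : b (v0 - 1) = true) (hb : ∃ j, b j = false) : some (v0 - 1) ∉ S1 b v0 := by
  haveI : NeZero k := ⟨by omega⟩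
  rintro ⟨t, hR, heq⟩
  obtain ⟨j, hj⟩ := hb
  have hjv : j ≠ v0 - 1 := fun h => by rw [h, hv0] at hj; exact Bool.noConfusion hj
  have ht : (t : ZMod k) = -1 := by
    have := Option.some_inj.1 heq
    linear_combination - this
  have htk : k - 1 ≤ t := cast_eq_neg_one_le hk ht
  set r := (j - v0).val with hr
  have hrj : v0 + (r : ZMod k) = j := by rw [hr, cast_val_eq]; ring
  have hrk : r < k := ZMod.val_lt _
  have hrne : r ≠ k - 1 := by
    intro h
    apply hjv
    have hcast : ((r : ℕ) : ZMod k) = -1 := by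
      rw [h]
      push_cast [Nat.cast_sub (by omega : 1 ≤ k)]
      rw [ZMod.natCast_self]; ring
    rw [hcast] at hrj
    linear_combination - hrj
  have : b (v0 + r) = true := hR r (by omega)
  rw [hrj, hj] at this
  exact Bool.noConfusion this

lemma acyc1 (hk : 3 ≤ k) {b : ZMod k → Bool} (hb : ∃ j, b j = false) :
    (gph (fun i => !b (i - 1)) b).IsAcyclic := by
  rw [SimpleGraph.isAcyclic_iff_forall_adj_isBridge]
  intro v w hvw
  have hvw' := hvw
  rw [gph, SimpleGraph.fromEdgeSet_adj] at hvw'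
  obtain ⟨⟨i, ⟨hi, he⟩ | ⟨hi, he⟩⟩, -⟩ := hvw'
  · -- spoke i; b (i - 1) = false
    simp only [Bool.not_eq_true'] at hi
    have hnr : ¬ ((gph (fun i => !b (i - 1)) b) \
        SimpleGraph.fromEdgeSet {spk k i}).Reachable (some i) none := by
      have hcl := closed1 hk (b := b) i
      rw [if_neg (by simp [hi])] at hcl
      exact not_reachable hcl (some_mem_S1 i) (none_not_mem_S1 i)
    rw [spk, Sym2.eq_iff] at he
    rcases he with ⟨rfl, rfl⟩ | ⟨rfl, rfl⟩
    · rw [SimpleGraph.isBridge_iff]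
      refine fun h => hnr ?_
      rw [show s((none : Option (ZMod k)), some i) = spk k i from rfl] at h
      exact h.symm
    · rw [SimpleGraph.isBridge_iff]
      refine fun h => hnr ?_
      rw [show s(some i, (none : Option (ZMod k))) = spk k i from Sym2.eq_swap] at h
      exact h
  · -- rim i : take v0 = i + 1
    have hnr : ¬ ((gph (fun i => !b (i - 1)) b) \
        SimpleGraph.fromEdgeSet {rim k i}).Reachable (some (i + 1)) (some i) := by
      have hcl := closed1 hk (b := b) (i + 1)
      rw [show i + 1 - 1 = i by ring, if_pos hi] at hcl
      have hmem := pred_not_mem_S1 hk (v0 := i + 1) (b := b)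
        (by rw [show i + 1 - 1 = i by ring]; exact hi) hb
      rw [show i + 1 - 1 = i by ring] at hmem
      exact not_reachable hcl (some_mem_S1 (i + 1)) hmem
    rw [rim, Sym2.eq_iff] at he
    rcases he with ⟨rfl, rfl⟩ | ⟨rfl, rfl⟩
    · rw [SimpleGraph.isBridge_iff]
      refine fun h => hnr ?_
      rw [show s(some i, some (i + 1)) = rim k i from rfl] at h
      exact h.symm
    · rw [SimpleGraph.isBridge_iff]
      refine fun h => hnr ?_
      rw [show s(some (i + 1), some i) = rim k i from Sym2.eq_swap] at h
      exact h

lemma edgeSet_gph (hk : 3 ≤ k) (a b : ZMod k → Bool) :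
    (gph a b).edgeSet = wset a b := by
  rw [gph, SimpleGraph.edgeSet_fromEdgeSet]
  ext e
  refine ⟨fun h => h.1, fun h => ⟨h, ?_⟩⟩
  rcases h with ⟨i, ⟨-, rfl⟩ | ⟨-, rfl⟩⟩
  · exact spk_not_diag i
  · exact rim_not_diag hk i

/-- Finset of indices where a `Bool`-function is true. -/
def tset [NeZero k] (a : ZMod k → Bool) : Finset (ZMod k) :=
  Finset.univ.filter (fun i => a i = true)

lemma wset_eq_coe [NeZero k] (hk : 3 ≤ k) (a b : ZMod k → Bool) :
    wset a b = ↑((tset a).image (spk k) ∪ (tset b).image (rim k)) := by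
  ext e
  simp only [wset, Set.mem_setOf_eq, Finset.coe_union, Set.mem_union, Finset.coe_image,
    Set.mem_image, Finset.mem_coe, tset, Finset.mem_filter, Finset.mem_univ, true_and]
  constructor
  · rintro ⟨i, ⟨hi, rfl⟩ | ⟨hi, rfl⟩⟩
    · exact Or.inl ⟨i, hi, rfl⟩
    · exact Or.inr ⟨i, hi, rfl⟩
  · rintro (⟨i, hi, rfl⟩ | ⟨i, hi, rfl⟩)
    · exact ⟨i, Or.inl ⟨hi, rfl⟩⟩
    · exact ⟨i, Or.inr ⟨hi, rfl⟩⟩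

lemma ncard_wset [NeZero k] (hk : 3 ≤ k) (a b : ZMod k → Bool) :
    (wset a b).ncard = (tset a).card + (tset b).card := by
  rw [wset_eq_coe hk a b, Set.ncard_coe_finset,
    Finset.card_union_of_disjoint, Finset.card_image_of_injective _ (fun i j => spk_inj),
    Finset.card_image_of_injective _ (fun i j h => rim_inj hk h)]
  rw [Finset.disjoint_left]
  rintro e he he'
  simp only [Finset.mem_image] at he he'
  obtain ⟨i, -, rfl⟩ := he
  obtain ⟨j, -, hj⟩ := he'
  exact spk_ne_rim i j hj.symm

lemma tset_card_compl [NeZero k] (b : ZMod k → Bool) :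
    (tset (fun i => !b i)).card = k - (tset b).card := by
  have h : (tset b).card + (tset (fun i => !b i)).card = k := by
    rw [tset, tset, show (Finset.filter (fun i => (!b i) = true) Finset.univ)
        = Finset.filter (fun i => ¬ (b i = true)) (Finset.univ : Finset (ZMod k)) from
      Finset.filter_congr (by intro i _; simp)]
    rw [Finset.card_filter_add_card_filter_not, Finset.card_univ, ZMod.card]
  omega

lemma card_of_tree (hk : 3 ≤ k) {a b : ZMod k → Bool}
    (h : (gph a b).IsTree) :
    haveI : NeZero k := ⟨by omega⟩
    (tset a).card + (tset b).card = k := by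
  haveI : NeZero k := ⟨by omega⟩
  haveI : Fintype ((gph a b).edgeSet) := Set.Finite.fintype (Set.toFinite _)
  have hc := h.card_edgeFinset
  rw [SimpleGraph.edgeFinset, ← Set.ncard_eq_toFinset_card'] at hc
  rw [edgeSet_gph hk, ncard_wset hk] at hc
  rw [Fintype.card_option, ZMod.card] at hc
  omega

lemma tree0 (hk : 3 ≤ k) {b : ZMod k → Bool} (hb : ∃ i, b i = false) :
    (gph (fun i => !b i) b).IsTree :=
  ⟨conn0 hk hb, acyc0 hk hb⟩

lemma tree1 (hk : 3 ≤ k) {b : ZMod k → Bool} (hb : ∃ i, b i = false) :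
    (gph (fun i => !b (i - 1)) b).IsTree :=
  ⟨conn1 hk hb, acyc1 hk hb⟩

lemma forward0 (hk : 3 ≤ k) {b : ZMod k → Bool} (hb0 : ∃ i, b i = false)
    (hb1 : ∃ i, b i = true) : IsCoupledTree k (wset (fun i => !b i) b) := by
  refine ⟨wset_subset_wheel _ _, tree0 hk hb0, ?_⟩
  rw [wheel_diff_wset hk]
  have := tree0 (b := fun i => !b i) hk ?_
  · exact this
  · obtain ⟨i, hi⟩ := hb1
    exact ⟨i, by simp [hi]⟩

lemma forward1 (hk : 3 ≤ k) {b : ZMod k → Bool} (hb0 : ∃ i, b i = false)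
    (hb1 : ∃ i, b i = true) : IsCoupledTree k (wset (fun i => !b (i - 1)) b) := by
  refine ⟨wset_subset_wheel _ _, tree1 hk hb0, ?_⟩
  rw [wheel_diff_wset hk]
  have := tree1 (b := fun i => !b i) hk ?_
  · exact this
  · obtain ⟨i, hi⟩ := hb1
    exact ⟨i, by simp [hi]⟩

lemma cast_km1 [NeZero k] (hk : 3 ≤ k) : ((k - 1 : ℕ) : ZMod k) = -1 := by
  have h : ((k : ℕ) : ZMod k) = 0 := ZMod.natCast_self k
  rw [Nat.cast_sub (by omega : 1 ≤ k), h]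
  push_cast
  ring

/-- Key structural lemma: every rim-arc contains exactly one spoke. -/
lemma master [NeZero k] (hk : 3 ≤ k) {a b : ZMod k → Bool}
    (hconn : (gph a b).Connected)
    (hcard : (tset a).card + (tset b).card = k) :
    ∀ (i : ZMod k) (m : ℕ), b (i - 1) = false → (∀ t < m, b (i + t) = true) →
      b (i + m) = false →
      (∃ t ≤ m, a (i + t) = true) ∧
        ∀ t1 ≤ m, ∀ t2 ≤ m, a (i + t1) = true → a (i + t2) = true → t1 = t2 := by
  -- b is not identically true
  have hballt : ∃ j, b j = false := by
    by_contra hcon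
    push_neg at hcon
    have hb' : ∀ j, b j = true := fun j => by
      cases hbj : b j
      · exact absurd hbj (hcon j)
      · rfl
    have hbu : tset b = Finset.univ := by
      ext i; simp [tset, hb' i]
    rw [hbu, Finset.card_univ, ZMod.card] at hcard
    have hca : (tset a).card = 0 := by omega
    have ha : ∀ i, a i ≠ true := by
      intro i hi
      have hmem : i ∈ tset a := by simp [tset, hi]
      rw [Finset.card_eq_zero.1 hca] at hmem
      simp at hmem
    obtain ⟨p⟩ := hconn.preconnected none (some 0)
    cases p with
    | cons h _ =>
      obtain ⟨i, -, hi⟩ := adj_none_cases h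
      exact ha i hi
  have hex : ∀ v : ZMod k, ∃ t : ℕ, b (v + t) = false := fun v => by
    obtain ⟨j, hj⟩ := hballt
    exact ⟨(j - v).val, by rwa [cast_val_eq, add_sub_cancel]⟩
  obtain ⟨eb, hebf, heblt⟩ : ∃ eb : ZMod k → ℕ,
      (∀ v, b (v + eb v) = false) ∧ (∀ v, ∀ t < eb v, b (v + t) = true) :=
    ⟨fun v => Nat.find (hex v), fun v => Nat.find_spec (hex v),
      fun v t ht => by simpa using Nat.find_min (hex v) ht⟩
  have ebuniq : ∀ (v : ZMod k) (x : ℕ), b (v + x) = false → (∀ t < x, b (v + t) = true) →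
      x = eb v := by
    intro v x hx hxlt
    rcases Nat.lt_trichotomy x (eb v) with h | h | h
    · rw [heblt v x h] at hx; exact Bool.noConfusion hx
    · exact h
    · exact absurd (hebf v) (by rw [hxlt (eb v) h]; simp)
  have heb_self : ∀ v, b v = false → eb v = 0 := by
    intro v hv
    have := ebuniq v 0 (by simpa using hv) (by omega)
    omega
  have heb_succ : ∀ v, b v = true → eb v = eb (v + 1) + 1 := by
    intro v hv
    refine (ebuniq v (eb (v + 1) + 1) ?_ ?_).symm
    · rw [show v + ((eb (v+1) + 1 : ℕ) : ZMod k) = (v + 1) + (eb (v+1) : ℕ) by push_cast; ring]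
      exact hebf (v + 1)
    · intro t ht
      rcases t with _ | t'
      · simpa using hv
      · have h2 := heblt (v + 1) t' (by omega)
        rw [show (v + 1) + (t' : ℕ) = v + ((t' + 1 : ℕ) : ZMod k) by push_cast; ring] at h2
        exact h2
  have hrep_succ : ∀ v, b v = true → v + (eb v : ℕ) = (v + 1) + (eb (v + 1) : ℕ) := by
    intro v hv
    rw [heb_succ v hv]
    push_cast
    ring
  -- surjectivity from connectivity
  have hsurj : ∀ v, b v = false → ∃ u, a u = true ∧ u + (eb u : ℕ) = v := by
    intro v hv
    by_contra hcon
    push_neg at hcon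
    have hclosed : ∀ x y, x ∈ {x : Option (ZMod k) | ∃ u, x = some u ∧ u + (eb u : ℕ) = v} →
        (gph a b).Adj x y → y ∈ {x : Option (ZMod k) | ∃ u, x = some u ∧ u + (eb u : ℕ) = v} := by
      rintro x y ⟨u, rfl, huv⟩ hadj
      rcases adj_some_cases hadj with ⟨rfl, hu⟩ | ⟨rfl, hu⟩ | ⟨w, rfl, rfl, hw⟩
      · exact absurd huv (hcon u hu)
      · exact ⟨u + 1, rfl, by rw [← hrep_succ u hu]; exact huv⟩
      · exact ⟨w, rfl, by rw [hrep_succ w hw]; exact huv⟩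
    have hmem : some v ∈ {x : Option (ZMod k) | ∃ u, x = some u ∧ u + (eb u : ℕ) = v} :=
      ⟨v, rfl, by rw [heb_self v hv]; simp⟩
    have hnone : none ∉ {x : Option (ZMod k) | ∃ u, x = some u ∧ u + (eb u : ℕ) = v} := by
      rintro ⟨u, hu, -⟩; cases hu
    exact not_reachable hclosed hmem hnone (hconn.preconnected (some v) none)
  -- injectivity from cardinality
  have hinj : ∀ u1 u2, a u1 = true → a u2 = true →
      u1 + (eb u1 : ℕ) = u2 + (eb u2 : ℕ) → u1 = u2 := by
    have hcb : (tset a).card ≤ (Finset.univ.filter (fun v => b v = false)).card := by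
      have h1 : (tset b).card + (Finset.univ.filter (fun v => b v = false)).card = k := by
        rw [tset, show (Finset.filter (fun v => b v = false) Finset.univ)
            = Finset.filter (fun i => ¬ (b i = true)) (Finset.univ : Finset (ZMod k)) from
          Finset.filter_congr (by intro i _; simp)]
        rw [Finset.card_filter_add_card_filter_not, Finset.card_univ, ZMod.card]
      omega
    intro u1 u2 h1 h2 h12
    exact Finset.inj_on_of_surj_on_of_card_le
      (s := tset a) (t := Finset.univ.filter (fun v => b v = false))
      (fun u _ => u + (eb u : ℕ)) (fun u hu => by simp [hebf u])
      (fun v hv => by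
        simp only [Finset.mem_filter, Finset.mem_univ, true_and] at hv
        obtain ⟨u, hu, hru⟩ := hsurj v hv
        exact ⟨u, by simp [tset, hu], hru⟩)
      hcb (by simp [tset, h1]) (by simp [tset, h2]) h12
  intro i m hm1 hrun hm2
  have hmk : m < k := by
    by_contra hge
    push_neg at hge
    have h1 := hrun (k - 1) (by omega)
    rw [show i + ((k - 1 : ℕ) : ZMod k) = i - 1 by rw [cast_km1 hk]; ring] at h1
    rw [hm1] at h1
    exact Bool.noConfusion h1
  have hrepval : ∀ j, j ≤ m → (i + ((m - j : ℕ) : ZMod k)) + (eb (i + ((m - j : ℕ) : ZMod k)) : ℕ)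
      = i + (m : ℕ) := by
    intro j
    induction j with
    | zero =>
      intro _
      rw [Nat.sub_zero, heb_self _ hm2]
      simp
    | succ j' ih =>
      intro hj
      have hbt : b (i + ((m - (j' + 1) : ℕ) : ZMod k)) = true := hrun _ (by omega)
      rw [hrep_succ _ hbt, show i + ((m - (j' + 1) : ℕ) : ZMod k) + 1
          = i + ((m - j' : ℕ) : ZMod k) by
        rw [show (m - j' : ℕ) = (m - (j' + 1) : ℕ) + 1 by omega]
        push_cast; ring]
      exact ih (by omega)
  have hrepval' : ∀ t, t ≤ m → (i + (t : ℕ)) + (eb (i + (t : ℕ)) : ℕ) = i + (m : ℕ) := by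
    intro t ht
    have := hrepval (m - t) (by omega)
    rwa [show (m - (m - t) : ℕ) = t by omega] at this
  constructor
  · -- existence
    obtain ⟨u, hu, hru⟩ := hsurj (i + m) hm2
    by_cases hle : eb u ≤ m
    · refine ⟨m - eb u, by omega, ?_⟩
      have heq : i + ((m - eb u : ℕ) : ZMod k) = u := by
        push_cast [Nat.cast_sub hle]
        linear_combination - hru
      rwa [heq]
    · exfalso
      push_neg at hle
      have h1 := heblt u (eb u - m - 1) (by omega)
      rw [show u + ((eb u - m - 1 : ℕ) : ZMod k) = i - 1 by
        push_cast [Nat.cast_sub (show m ≤ eb u by omega),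
          Nat.cast_sub (show 1 ≤ eb u - m by omega)]
        linear_combination hru] at h1
      rw [hm1] at h1
      exact Bool.noConfusion h1
  · -- uniqueness
    intro t1 ht1 t2 ht2 ha1 ha2
    have h12 : i + (t1 : ℕ) = i + (t2 : ℕ) :=
      hinj _ _ ha1 ha2 (by rw [hrepval' t1 ht1, hrepval' t2 ht2])
    have hcast : ((t1 : ℕ) : ZMod k) = ((t2 : ℕ) : ZMod k) := by linear_combination h12
    have hval := congrArg ZMod.val hcast
    rwa [ZMod.val_natCast, ZMod.val_natCast, Nat.mod_eq_of_lt (by omega),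
      Nat.mod_eq_of_lt (by omega)] at hval

lemma dichotomy [NeZero k] (hk : 3 ≤ k) {a b : ZMod k → Bool}
    (F1 : ∀ (i : ZMod k) (m : ℕ), b (i - 1) = false → (∀ t < m, b (i + t) = true) →
      b (i + m) = false →
      (∃ t ≤ m, a (i + t) = true) ∧
        ∀ t1 ≤ m, ∀ t2 ≤ m, a (i + t1) = true → a (i + t2) = true → t1 = t2)
    (F2 : ∀ (i : ZMod k) (m : ℕ), (!b (i - 1)) = false → (∀ t < m, (!b (i + t)) = true) →
      (!b (i + m)) = false →
      (∃ t ≤ m, (!a (i + t)) = true) ∧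
        ∀ t1 ≤ m, ∀ t2 ≤ m, (!a (i + t1)) = true → (!a (i + t2)) = true → t1 = t2)
    (hbf : ∃ i, b i = false) (hbt : ∃ i, b i = true) :
    (∀ i, a i = !b i) ∨ (∀ i, a i = !b (i - 1)) := by
  -- interior forced values
  have hA0 : ∀ i : ZMod k, b (i - 1) = true → b i = true → a i = false := by
    intro i h1 h2
    obtain ⟨⟨t, ht0, hta⟩, -⟩ := F2 i 0 (by simp [h1]) (by omega) (by simp [h2])
    interval_cases t
    simpa using hta
  have hA1 : ∀ i : ZMod k, b (i - 1) = false → b i = false → a i = true := by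
    intro i h1 h2
    obtain ⟨⟨t, ht0, hta⟩, -⟩ := F1 i 0 h1 (by omega) (by simp [h2])
    interval_cases t
    simpa using hta
  by_cases hS : ∃ v0 : ZMod k, b (v0 - 1) = false ∧ b v0 = true ∧ a v0 = true
  · -- case B : solution a i = !b (i-1)
    right
    obtain ⟨v0, hv1, hv2, hv3⟩ := hS
    have Q : ∀ d : ℕ, a (v0 + (d : ℕ)) = !b (v0 + (d : ℕ) - 1) := by
      intro d
      induction d using Nat.strong_induction_on with
      | _ d ih =>
        by_cases hd : d = 0
        · subst hd
          simpa [hv1] using hv3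
        · cases hb1 : b (v0 + (d : ℕ) - 1) <;> cases hb2 : b (v0 + (d : ℕ))
          · -- (false, false)
            simp only [Bool.not_false]
            exact hA1 _ hb1 hb2
          · -- (false, true) : start-of-run vertex, need a = true
            simp only [Bool.not_false]
            have hex2 : ∃ t : ℕ, b (v0 + (d : ℕ) - 1 - (t : ℕ)) = true := by
              refine ⟨d - 1, ?_⟩
              rw [show v0 + (d : ℕ) - 1 - ((d - 1 : ℕ) : ZMod k) = v0 by
                push_cast [Nat.cast_sub (show 1 ≤ d by omega)]; ring]
              exact hv2
            have hM : b (v0 + (d : ℕ) - 1 - ((Nat.find hex2 : ℕ) : ZMod k)) = true :=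
              Nat.find_spec hex2
            have hMlt : ∀ t < Nat.find hex2, b (v0 + (d : ℕ) - 1 - (t : ℕ)) = false :=
              fun t ht => by simpa using Nat.find_min hex2 ht
            set M := Nat.find hex2 with hMdef
            have hM1 : 1 ≤ M := by
              rcases Nat.eq_zero_or_pos M with h0 | h1
              · exfalso
                rw [h0] at hM
                simp only [Nat.cast_zero, sub_zero] at hM
                rw [hb1] at hM
                exact Bool.noConfusion hM
              · exact h1
            have hMd : M ≤ d - 1 := by
              apply Nat.find_le
              rw [show v0 + (d : ℕ) - 1 - ((d - 1 : ℕ) : ZMod k) = v0 by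
                push_cast [Nat.cast_sub (show 1 ≤ d by omega)]; ring]
              exact hv2
            obtain ⟨-, huniq⟩ := F2 (v0 + (d : ℕ) - (M : ℕ)) M
              (by rw [show v0 + (d : ℕ) - (M : ℕ) - 1
                  = v0 + (d : ℕ) - 1 - (M : ℕ) by ring]
                  simp [hM])
              (fun t ht => by
                rw [show v0 + (d : ℕ) - (M : ℕ) + (t : ℕ)
                    = v0 + (d : ℕ) - 1 - ((M - 1 - t : ℕ) : ZMod k) by
                  push_cast [Nat.cast_sub (show t ≤ M - 1 by omega),
                    Nat.cast_sub (show 1 ≤ M by omega)]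
                  ring]
                simp [hMlt (M - 1 - t) (by omega)])
              (by rw [show v0 + (d : ℕ) - (M : ℕ) + (M : ℕ) = v0 + (d : ℕ) by ring]
                  simp [hb2])
            -- a at the start of the preceding false-run is false by IH
            have hap : a (v0 + (d : ℕ) - (M : ℕ)) = false := by
              have hih := ih (d - M) (by omega)
              rw [show v0 + ((d - M : ℕ) : ZMod k)
                  = v0 + (d : ℕ) - (M : ℕ) by
                push_cast [Nat.cast_sub (show M ≤ d by omega)]; ring] at hih
              rw [hih, show v0 + (d : ℕ) - (M : ℕ) - 1
                  = v0 + (d : ℕ) - 1 - (M : ℕ) by ring, hM]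
              rfl
            by_contra hai
            have hai' : a (v0 + (d : ℕ)) = false := by
              cases h : a (v0 + (d : ℕ))
              · rfl
              · exact absurd h hai
            have h0 : (!a (v0 + (d : ℕ) - (M : ℕ) + ((0 : ℕ) : ZMod k))) = true := by
              simp [hap]
            have hMe : (!a (v0 + (d : ℕ) - (M : ℕ) + (M : ℕ))) = true := by
              rw [show v0 + (d : ℕ) - (M : ℕ) + (M : ℕ) = v0 + (d : ℕ) by ring]
              simp [hai']
            have := huniq 0 (Nat.zero_le M) M le_rfl h0 hMe
            omega
          · -- (true, false) : end-of-run vertex, need a = false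
            simp only [Bool.not_true]
            have hex2 : ∃ t : ℕ, b (v0 + (d : ℕ) - 1 - (t : ℕ)) = false := by
              refine ⟨d, ?_⟩
              rw [show v0 + (d : ℕ) - 1 - ((d : ℕ) : ZMod k) = v0 - 1 by ring]
              exact hv1
            have hM : b (v0 + (d : ℕ) - 1 - ((Nat.find hex2 : ℕ) : ZMod k)) = false :=
              Nat.find_spec hex2
            have hMlt : ∀ t < Nat.find hex2, b (v0 + (d : ℕ) - 1 - (t : ℕ)) = true :=
              fun t ht => by simpa using Nat.find_min hex2 ht
            set M := Nat.find hex2 with hMdef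
            have hM1 : 1 ≤ M := by
              rcases Nat.eq_zero_or_pos M with h0 | h1
              · exfalso
                rw [h0] at hM
                simp only [Nat.cast_zero, sub_zero] at hM
                rw [hb1] at hM
                exact Bool.noConfusion hM
              · exact h1
            have hMd : M ≤ d := by
              apply Nat.find_le
              rw [show v0 + (d : ℕ) - 1 - ((d : ℕ) : ZMod k) = v0 - 1 by ring]
              exact hv1
            obtain ⟨-, huniq⟩ := F1 (v0 + (d : ℕ) - (M : ℕ)) M
              (by rw [show v0 + (d : ℕ) - (M : ℕ) - 1
                  = v0 + (d : ℕ) - 1 - (M : ℕ) by ring]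
                  exact hM)
              (fun t ht => by
                rw [show v0 + (d : ℕ) - (M : ℕ) + (t : ℕ)
                    = v0 + (d : ℕ) - 1 - ((M - 1 - t : ℕ) : ZMod k) by
                  push_cast [Nat.cast_sub (show t ≤ M - 1 by omega),
                    Nat.cast_sub (show 1 ≤ M by omega)]
                  ring]
                exact hMlt (M - 1 - t) (by omega))
              (by rw [show v0 + (d : ℕ) - (M : ℕ) + (M : ℕ) = v0 + (d : ℕ) by ring]
                  exact hb2)
            -- a at the start of the run is true (by IH or the base spoke)
            have hap : a (v0 + (d : ℕ) - (M : ℕ)) = true := by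
              by_cases hMdeq : M = d
              · rw [hMdeq, show v0 + (d : ℕ) - (d : ℕ) = v0 by ring]
                exact hv3
              · have hih := ih (d - M) (by omega)
                rw [show v0 + ((d - M : ℕ) : ZMod k)
                    = v0 + (d : ℕ) - (M : ℕ) by
                  push_cast [Nat.cast_sub (show M ≤ d by omega)]; ring] at hih
                rw [hih, show v0 + (d : ℕ) - (M : ℕ) - 1
                    = v0 + (d : ℕ) - 1 - (M : ℕ) by ring, hM]
                rfl
            by_contra hai
            have hai' : a (v0 + (d : ℕ)) = true := by
              cases h : a (v0 + (d : ℕ))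
              · exact absurd h hai
              · rfl
            have h0 : a (v0 + (d : ℕ) - (M : ℕ) + ((0 : ℕ) : ZMod k)) = true := by
              simpa using hap
            have hMe : a (v0 + (d : ℕ) - (M : ℕ) + (M : ℕ)) = true := by
              rw [show v0 + (d : ℕ) - (M : ℕ) + (M : ℕ) = v0 + (d : ℕ) by ring]
              exact hai'
            have := huniq 0 (Nat.zero_le M) M le_rfl h0 hMe
            omega
          · -- (true, true)
            simp only [Bool.not_true]
            exact hA0 _ hb1 hb2
    intro i
    have hq := Q ((i - v0).val)
    rwa [cast_val_eq, show v0 + (i - v0) = i by ring] at hq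
  · -- case A : solution a i = !b i
    left
    have hnS : ∀ v : ZMod k, b (v - 1) = false → b v = true → a v = false := by
      intro v h1 h2
      cases h3 : a v
      · rfl
      · exact absurd ⟨v, h1, h2, h3⟩ hS
    intro i
    cases hb1 : b (i - 1) <;> cases hb2 : b i
    · -- (false, false)
      simp only [Bool.not_false]
      exact hA1 _ hb1 hb2
    · -- (false, true)
      simp only [Bool.not_true]
      exact hnS _ hb1 hb2
    · -- (true, false) : need a i = true
      simp only [Bool.not_false]
      have hex2 : ∃ t : ℕ, b (i - 1 - (t : ℕ)) = false := by
        obtain ⟨j, hj⟩ := hbf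
        refine ⟨(i - 1 - j).val, ?_⟩
        rw [cast_val_eq, show i - 1 - (i - 1 - j) = j by ring]
        exact hj
      have hM : b (i - 1 - ((Nat.find hex2 : ℕ) : ZMod k)) = false := Nat.find_spec hex2
      have hMlt : ∀ t < Nat.find hex2, b (i - 1 - (t : ℕ)) = true :=
        fun t ht => by simpa using Nat.find_min hex2 ht
      set M := Nat.find hex2 with hMdef
      have hM1 : 1 ≤ M := by
        rcases Nat.eq_zero_or_pos M with h0 | h1
        · exfalso
          rw [h0] at hM
          simp only [Nat.cast_zero, sub_zero] at hM
          rw [hb1] at hM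
          exact Bool.noConfusion hM
        · exact h1
      obtain ⟨⟨t, htM, hta⟩, -⟩ := F1 (i - (M : ℕ)) M
        (by rw [show i - (M : ℕ) - 1 = i - 1 - (M : ℕ) by ring]; exact hM)
        (fun t ht => by
          rw [show i - (M : ℕ) + (t : ℕ) = i - 1 - ((M - 1 - t : ℕ) : ZMod k) by
            push_cast [Nat.cast_sub (show t ≤ M - 1 by omega),
              Nat.cast_sub (show 1 ≤ M by omega)]
            ring]
          exact hMlt (M - 1 - t) (by omega))
        (by rw [show i - (M : ℕ) + (M : ℕ) = i by ring]; exact hb2)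
      rcases Nat.lt_or_ge t M with hlt | hge
      · exfalso
        rcases t with _ | t'
        · -- t = 0 : start of run is (false, true), no spoke by hnS
          have hstart : a (i - (M : ℕ)) = false := by
            apply hnS
            · rw [show i - (M : ℕ) - 1 = i - 1 - (M : ℕ) by ring]; exact hM
            · have := hMlt (M - 1) (by omega)
              rw [show i - 1 - ((M - 1 : ℕ) : ZMod k) = i - (M : ℕ) by
                push_cast [Nat.cast_sub (show 1 ≤ M by omega)]; ring] at this
              exact this
          rw [show i - (M : ℕ) + ((0 : ℕ) : ZMod k) = i - (M : ℕ) by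
            simp] at hta
          rw [hstart] at hta
          exact Bool.noConfusion hta
        · -- 0 < t < M : interior vertex, no spoke by hA0
          have hint : a (i - (M : ℕ) + ((t' + 1 : ℕ) : ZMod k)) = false := by
            apply hA0
            · rw [show i - (M : ℕ) + ((t' + 1 : ℕ) : ZMod k) - 1
                  = i - 1 - ((M - 1 - t' : ℕ) : ZMod k) by
                push_cast [Nat.cast_sub (show t' ≤ M - 1 by omega),
                  Nat.cast_sub (show 1 ≤ M by omega)]
                ring]
              exact hMlt (M - 1 - t') (by omega)
            · rw [show i - (M : ℕ) + ((t' + 1 : ℕ) : ZMod k)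
                  = i - 1 - ((M - 1 - (t' + 1) : ℕ) : ZMod k) by
                push_cast [Nat.cast_sub (show t' + 1 ≤ M - 1 by omega),
                  Nat.cast_sub (show 1 ≤ M by omega)]
                ring]
              exact hMlt (M - 1 - (t' + 1)) (by omega)
          rw [hint] at hta
          exact Bool.noConfusion hta
      · have ht' : t = M := by omega
        subst ht'
        rw [show i - (M : ℕ) + (M : ℕ) = i by ring] at hta
        exact hta
    · -- (true, true)
      simp only [Bool.not_true]
      exact hA0 _ hb1 hb2

/-- If all of `b` is true then the graph is disconnected (center isolated). -/
lemma exists_false_b [NeZero k] (hk : 3 ≤ k) {a b : ZMod k → Bool}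
    (hconn : (gph a b).Connected)
    (hcard : (tset a).card + (tset b).card = k) : ∃ j, b j = false := by
  by_contra hcon
  push_neg at hcon
  have hb' : ∀ j, b j = true := fun j => by
    cases hbj : b j
    · exact absurd hbj (hcon j)
    · rfl
  have hbu : tset b = Finset.univ := by
    ext i; simp [tset, hb' i]
  rw [hbu, Finset.card_univ, ZMod.card] at hcard
  have hca : (tset a).card = 0 := by omega
  have ha : ∀ i, a i ≠ true := by
    intro i hi
    have hmem : i ∈ tset a := by simp [tset, hi]
    rw [Finset.card_eq_zero.1 hca] at hmem
    simp at hmem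
  obtain ⟨p⟩ := hconn.preconnected none (some 0)
  cases p with
  | cons h _ =>
    obtain ⟨i, -, hi⟩ := adj_none_cases h
    exact ha i hi

lemma const_of_shift [NeZero k] {b : ZMod k → Bool} (h : ∀ j : ZMod k, b j = b (j - 1)) :
    ∀ i j : ZMod k, b i = b j := by
  have key : ∀ (n : ℕ) (j : ZMod k), b (j - (n : ℕ)) = b j := by
    intro n
    induction n with
    | zero => simp
    | succ n ih =>
      intro j
      rw [show j - ((n + 1 : ℕ) : ZMod k) = (j - 1) - (n : ℕ) by push_cast; ring,
        ih (j - 1), ← h j]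
  intro i j
  have hkey := key ((j - i).val) j
  rwa [cast_val_eq, show j - (j - i) = i by ring] at hkey

/-- Backward direction: every coupled tree has the canonical form. -/
lemma backward (hk : 3 ≤ k) {T : Set (Sym2 (Option (ZMod k)))} (h : IsCoupledTree k T) :
    ∃ b : ZMod k → Bool, ((∃ i, b i = false) ∧ (∃ i, b i = true)) ∧
      (T = wset (fun i => !b i) b ∨ T = wset (fun i => !b (i - 1)) b) := by
  haveI : NeZero k := ⟨by omega⟩
  classical
  obtain ⟨hsub, ht1, ht2⟩ := h
  set a : ZMod k → Bool := fun i => decide (spk k i ∈ T) with ha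
  set b : ZMod k → Bool := fun i => decide (rim k i ∈ T) with hb
  have hTw : T = wset a b :=
    wset_eq_of_subset hsub (fun i => by simp [ha]) (fun i => by simp [hb])
  have hCw : wheelEdges k \ T = wset (fun i => !a i) (fun i => !b i) := by
    rw [hTw, wheel_diff_wset hk]
  have hg1 : (gph a b).IsTree := by rw [gph, ← hTw]; exact ht1
  have hg2 : (gph (fun i => !a i) (fun i => !b i)).IsTree := by
    rw [gph, ← hCw]; exact ht2
  have hcard1 := card_of_tree hk hg1
  have hcard2 := card_of_tree hk hg2
  have hbf : ∃ i, b i = false := exists_false_b hk hg1.isConnected hcard1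
  have hbt : ∃ i, b i = true := by
    obtain ⟨j, hj⟩ := exists_false_b hk hg2.isConnected hcard2
    exact ⟨j, by simpa using hj⟩
  have F1 := master hk hg1.isConnected hcard1
  have F2 := master hk hg2.isConnected hcard2
  rcases dichotomy hk F1 F2 hbf hbt with hd | hd
  · exact ⟨b, ⟨hbf, hbt⟩, Or.inl (by rw [hTw, funext hd])⟩
  · exact ⟨b, ⟨hbf, hbt⟩, Or.inr (by rw [hTw, funext hd])⟩

/-- The set of nonconstant `b`'s. -/
def Sne (k : ℕ) : Set (ZMod k → Bool) :=
  {b | (∃ i, b i = false) ∧ (∃ i, b i = true)}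

lemma wset_b_eq (hk : 3 ≤ k) {a a' b b' : ZMod k → Bool}
    (h : wset a b = wset a' b') : b = b' := by
  funext i
  have h1 : b i = true ↔ b' i = true := by
    rw [← rim_mem_wset hk (a := a) (b := b), ← rim_mem_wset hk (a := a') (b := b'), h]
  cases hb : b i
  · cases hb' : b' i
    · rfl
    · exact absurd (h1.2 hb') (by simp [hb])
  · exact (h1.1 hb).symm

lemma wset_a_iff (hk : 3 ≤ k) {a a' b b' : ZMod k → Bool}
    (h : wset a b = wset a' b') : ∀ i, a i = a' i := by
  intro i
  have h1 : a i = true ↔ a' i = true := by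
    rw [← spk_mem_wset (a := a) (b := b), ← spk_mem_wset (a := a') (b := b'), h]
  cases hb : a i
  · cases hb' : a' i
    · rfl
    · exact absurd (h1.2 hb') (by simp [hb])
  · exact (h1.1 hb).symm

lemma images_ne (hk : 3 ≤ k) {b c : ZMod k → Bool} (hbne : b ∈ Sne k)
    (h : wset (fun i => !b i) b = wset (fun i => !c (i - 1)) c) : False := by
  haveI : NeZero k := ⟨by omega⟩
  have hbc : b = c := wset_b_eq hk h
  subst hbc
  have hsh := wset_a_iff hk h
  have hshift : ∀ j : ZMod k, b j = b (j - 1) := by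
    intro j
    have := hsh j
    have h2 := congrArg (fun x => !x) this
    simpa using h2
  obtain ⟨⟨i0, hi0⟩, ⟨i1, hi1⟩⟩ := hbne
  have := const_of_shift hshift i0 i1
  rw [hi0, hi1] at this
  exact Bool.noConfusion this

end Wheel

open Wheel in
theorem stmt3 (k : ℕ) (hk : 3 ≤ k) :
    {T : Set (Sym2 (Option (ZMod k))) | IsCoupledTree k T}.ncard =
      2 ^ (k + 1) - 4 := by
  haveI : NeZero k := ⟨by omega⟩
  classical
  have hset : {T : Set (Sym2 (Option (ZMod k))) | IsCoupledTree k T} =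
      ((fun b : ZMod k → Bool => wset (fun i => !b i) b) '' Sne k) ∪
      ((fun b : ZMod k → Bool => wset (fun i => !b (i - 1)) b) '' Sne k) := by
    ext T
    constructor
    · intro hT
      obtain ⟨b, hbne, hc | hc⟩ := backward hk hT
      · exact Or.inl ⟨b, hbne, hc.symm⟩
      · exact Or.inr ⟨b, hbne, hc.symm⟩
    · rintro (⟨b, ⟨hbf, hbt⟩, rfl⟩ | ⟨b, ⟨hbf, hbt⟩, rfl⟩)
      · exact forward0 hk hbf hbt
      · exact forward1 hk hbf hbt
  have hdisj : Disjoint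
      ((fun b : ZMod k → Bool => wset (fun i => !b i) b) '' Sne k)
      ((fun b : ZMod k → Bool => wset (fun i => !b (i - 1)) b) '' Sne k) := by
    rw [Set.disjoint_left]
    rintro T ⟨b, hb, rfl⟩ ⟨c, hc, heq⟩
    exact images_ne hk hb heq.symm
  rw [hset, Set.ncard_union_eq hdisj (Set.toFinite _) (Set.toFinite _),
    Set.ncard_image_of_injOn (fun b _ c _ h => wset_b_eq hk h),
    Set.ncard_image_of_injOn (fun b _ c _ h => wset_b_eq hk h)]
  have hSne : (Sne k).ncard = 2 ^ k - 2 := by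
    have hSeq : Sne k = Set.univ \ {(fun _ => false : ZMod k → Bool), (fun _ => true)} := by
      ext b
      simp only [Sne, Set.mem_setOf_eq, Set.mem_diff, Set.mem_univ, true_and,
        Set.mem_insert_iff, Set.mem_singleton_iff]
      constructor
      · rintro ⟨⟨i0, h0⟩, ⟨i1, h1⟩⟩
        rintro (rfl | rfl)
        · exact absurd h1 (by simp)
        · exact absurd h0 (by simp)
      · intro hne
        push_neg at hne
        obtain ⟨h1, h2⟩ := hne
        constructor
        · by_contra hc
          push_neg at hc
          apply h2
          funext i
          cases hbi : b i
          · exact absurd hbi (hc i)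
          · rfl
        · by_contra hc
          push_neg at hc
          apply h1
          funext i
          cases hbi : b i
          · rfl
          · exact absurd hbi (hc i)
    rw [hSeq, Set.ncard_diff (Set.subset_univ _), Set.ncard_univ,
      Nat.card_eq_fintype_card, Fintype.card_fun, Fintype.card_bool, ZMod.card,
      Set.ncard_pair (by
        intro h
        exact Bool.noConfusion (congrFun h 0))]
  rw [hSne]
  have h2k : 2 ≤ 2 ^ k := by
    calc 2 = 2 ^ 1 := rfl
    _ ≤ 2 ^ k := Nat.pow_le_pow_right (by omega) (by omega)
  rw [pow_succ]
  omega
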